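/- Let w ≥ 2 and consider the polynomial x^w − x^{w−1} − 2^{w−1} over ℂ. Then x = 2 is a root, and every other complex root x satisfies |x| < 2; i.e., 2 is the unique root of maximal absolute value. -/

import Mathlib

/-- `x = 2` is a root of `x^w − x^(w−1) − 2^(w−1)`, and every other complex
root has absolute value strictly less than `2`; so `2` is the unique root of
maximal absolute value. -/
theorem root_two_dominant (w : ℕ) (hw : 2 ≤ w) :
    ((2 : ℂ) ^ w - 2 ^ (w - 1) - 2 ^ (w - 1) = 0) ∧
    ∀ x : ℂ, x ^ w - x ^ (w - 1) - 2 ^ (w - 1) = 0 → x ≠ 2 →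
      ‖x‖ < 2 := by
  have hw1 : w = (w - 1) + 1 := by omega
  constructor
  · have h : (2 : ℂ) ^ w = 2 ^ (w - 1) * 2 := by
      conv_lhs => rw [hw1]
      rw [pow_succ]
    rw [h]; ring
  · intro x hx hne
    by_contra hlt
    push_neg at hlt
    have hpow : x ^ w = x ^ (w - 1) * x := by
      conv_lhs => rw [hw1]
      rw [pow_succ]
    have hfac : x ^ (w - 1) * (x - 1) = 2 ^ (w - 1) := by
      linear_combination hx - hpow
    have habs : ‖x‖ ^ (w - 1) * ‖x - 1‖ = 2 ^ (w - 1) := by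
      have := congrArg (‖·‖) hfac
      simpa [norm_mul, norm_pow] using this
    set a := ‖x‖ with ha
    set b := ‖x - 1‖ with hb
    have htri : a ≤ b + 1 := by
      have h := norm_add_le (x - 1) 1
      simpa [← hb] using h
    have hb1 : 1 ≤ b := by linarith
    have h2a : (2 : ℝ) ^ (w - 1) ≤ a ^ (w - 1) :=
      pow_le_pow_left₀ (by norm_num) hlt _
    have hpos : (0 : ℝ) < 2 ^ (w - 1) := by positivity
    have hbe : b = 1 := by nlinarith
    have hae : a = 2 := by
      by_contra hne2
      have hgt : 2 < a := lt_of_le_of_ne hlt (Ne.symm hne2)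
      have : (2 : ℝ) ^ (w - 1) < a ^ (w - 1) :=
        pow_lt_pow_left₀ hgt (by norm_num) (by omega)
      nlinarith
    -- now show x = 2, contradiction
    have hsq : x.re * x.re + x.im * x.im = 4 := by
      have h := Complex.sq_norm x
      rw [← ha, hae, Complex.normSq_apply] at h
      nlinarith
    have hsq1 : (x.re - 1) * (x.re - 1) + x.im * x.im = 1 := by
      have h := Complex.sq_norm (x - 1)
      rw [← hb, hbe, Complex.normSq_apply] at h
      simp only [Complex.sub_re, Complex.sub_im, Complex.one_re, Complex.one_im,
        sub_zero] at h
      nlinarith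
    have hre : x.re = 2 := by nlinarith
    have him : x.im = 0 := by nlinarith
    exact hne (Complex.ext (by simp [hre]) (by simp [him]))
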